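/- Let G be a finite cyclic group, G0 ⊆ G a subset that is not weakly half-factorial (i.e., some minimal zero-sum sequence over G0 has non-integral cross number). Then there exists a two-element subset G2 ⊆ G0 that is not weakly half-factorial. -/

import Mathlib

open Multiset

section Defs

variable {G : Type*} [AddCommGroup G]

/-- `S` is a zero-sum sequence over `G0`. -/
def IsZeroSumSeq (G0 : Set G) (S : Multiset G) : Prop :=
  (∀ g ∈ S, g ∈ G0) ∧ S.sum = 0

/-- `S` is a minimal zero-sum sequence over `G0`. -/
def IsMinZeroSum (G0 : Set G) (S : Multiset G) : Prop :=
  S ≠ 0 ∧ IsZeroSumSeq G0 S ∧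
    ∀ T : Multiset G, T ≤ S → T ≠ 0 → T ≠ S → T.sum ≠ 0

/-- The set of lengths of factorizations of `B` into minimal zero-sum sequences over `G0`. -/
def LengthSet (G0 : Set G) (B : Multiset G) : Set ℕ :=
  { k | ∃ F : Multiset (Multiset G), F.card = k ∧ (∀ A ∈ F, IsMinZeroSum G0 A) ∧ F.sum = B }

/-- The set of successive distances of a set of naturals. -/
def DeltaOf (L : Set ℕ) : Set ℕ :=
  { d | ∃ a ∈ L, ∃ b ∈ L, a < b ∧ b - a = d ∧ ∀ c ∈ L, ¬(a < c ∧ c < b) }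

/-- The set of distances of the monoid of zero-sum sequences over `G0`. -/
def DeltaB (G0 : Set G) : Set ℕ :=
  ⋃ B ∈ { B : Multiset G | IsZeroSumSeq G0 B }, DeltaOf (LengthSet G0 B)

/-- Minimal distance, with the convention `min ∅ = 0`. -/
noncomputable def minDelta (G0 : Set G) : ℕ := sInf (DeltaB G0)

/-- Cross number of a sequence. -/
noncomputable def crossNum (S : Multiset G) : ℚ :=
  (S.map fun g => (1 : ℚ) / (addOrderOf g : ℚ)).sum

/-- `G0` is weakly half-factorial. -/
def WeaklyHF (G0 : Set G) : Prop :=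
  ∀ A : Multiset G, IsMinZeroSum G0 A → ∃ m : ℕ, crossNum A = (m : ℚ)

/-- `G0` is half-factorial. -/
def HalfFactorial (G0 : Set G) : Prop :=
  ∀ B : Multiset G, IsZeroSumSeq G0 B →
    ∀ k ∈ LengthSet G0 B, ∀ l ∈ LengthSet G0 B, k = l

end Defs

section Aux

variable {G : Type*} [AddCommGroup G]

lemma crossNum_add' (S T : Multiset G) : crossNum (S + T) = crossNum S + crossNum T := by
  simp [crossNum]

lemma crossNum_replicate' (k : ℕ) (g : G) :
    crossNum (replicate k g) = (k : ℚ) / (addOrderOf g : ℚ) := by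
  simp [crossNum, Multiset.map_replicate, Multiset.sum_replicate, nsmul_eq_mul, mul_one_div, div_eq_mul_inv]

lemma exists_minZeroSum_le (G0 : Set G) :
    ∀ S : Multiset G, (∀ g ∈ S, g ∈ G0) → S.sum = 0 → S ≠ 0 →
      ∃ A, A ≤ S ∧ IsMinZeroSum G0 A := by
  intro S
  induction S using Multiset.strongInductionOn with
  | _ S ih =>
    intro h1 h2 h3
    by_cases hmin : ∀ T : Multiset G, T ≤ S → T ≠ 0 → T ≠ S → T.sum ≠ 0
    · exact ⟨S, le_refl S, h3, ⟨h1, h2⟩, hmin⟩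
    · push_neg at hmin
      obtain ⟨T, hTS, hT0, hTne, hTsum⟩ := hmin
      obtain ⟨A, hAT, hA⟩ := ih T (lt_of_le_of_ne hTS hTne)
        (fun g hg => h1 g (Multiset.mem_of_le hTS hg)) hTsum hT0
      exact ⟨A, le_trans hAT hTS, hA⟩

lemma whf_crossNum_nat (G0 : Set G) (hW : WeaklyHF G0) :
    ∀ S : Multiset G, IsZeroSumSeq G0 S → ∃ m : ℕ, crossNum S = (m : ℚ) := by
  intro S
  induction S using Multiset.strongInductionOn with
  | _ S ih =>
    intro hS
    rcases eq_or_ne S 0 with rfl | hS0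
    · exact ⟨0, by simp [crossNum]⟩
    · obtain ⟨A, hAS, hA⟩ := exists_minZeroSum_le G0 S hS.1 hS.2 hS0
      obtain ⟨T, rfl⟩ := Multiset.le_iff_exists_add.mp hAS
      obtain ⟨m1, hm1⟩ := hW A hA
      have hT : IsZeroSumSeq G0 T := by
        refine ⟨fun g hg => hS.1 g (by simp [hg]), ?_⟩
        have h2 := hS.2
        rw [Multiset.sum_add, hA.2.1.2, zero_add] at h2
        exact h2
      have hlt : T < A + T := by
        have hApos : 0 < A := lt_of_le_of_ne (Multiset.zero_le A) (Ne.symm hA.1)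
        exact lt_add_iff_pos_left T |>.mpr hApos
      obtain ⟨m2, hm2⟩ := ih T hlt hT
      exact ⟨m1 + m2, by rw [crossNum_add', hm1, hm2]; push_cast; ring⟩

end Aux
section Cyclic

variable {G : Type*} [AddCommGroup G] [Fintype G]

lemma pair_congr (e : G) (he : addOrderOf e = Fintype.card G)
    (uu : G → ℕ)
    (hmu : ∀ g : G, ((Fintype.card G / addOrderOf g) * uu g) • e = g)
    (hcop : ∀ g : G, Nat.Coprime (uu g) (addOrderOf g))
    (a b : G) (hW : WeaklyHF ({a, b} : Set G)) :
    ((uu a : ZMod (Nat.gcd (addOrderOf a) (addOrderOf b)))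
      = (uu b : ZMod (Nat.gcd (addOrderOf a) (addOrderOf b)))) := by
  set n := Fintype.card G with hn
  have hn0 : 0 < n := Fintype.card_pos
  set da := addOrderOf a with hda
  set db := addOrderOf b with hdb
  have hda0 : 0 < da := addOrderOf_pos a
  have hdb0 : 0 < db := addOrderOf_pos b
  have hdan : da ∣ n := addOrderOf_dvd_card
  have hdbn : db ∣ n := addOrderOf_dvd_card
  set g := Nat.gcd da db with hgdef
  have hg0 : 0 < g := Nat.gcd_pos_of_pos_left db hda0
  haveI : NeZero g := ⟨hg0.ne'⟩
  have hgda : g ∣ da := Nat.gcd_dvd_left da db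
  have hgdb : g ∣ db := Nat.gcd_dvd_right da db
  have hgn : g ∣ n := dvd_trans hgda hdan
  have hca : Nat.Coprime (uu a) g := (hcop a).coprime_dvd_right hgda
  set U : (ZMod g)ˣ := ZMod.unitOfCoprime (uu a) hca with hU
  have hUval : (U : ZMod g) = (uu a : ZMod g) := ZMod.coe_unitOfCoprime _ _
  set w : ZMod g := ((U⁻¹ : (ZMod g)ˣ) : ZMod g) with hw
  have hwua : w * (uu a : ZMod g) = 1 := by
    rw [hw, ← hUval, ← Units.val_mul, inv_mul_cancel, Units.val_one]
  set s : ℕ := (-(uu b : ZMod g) * w).val with hs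
  have hslt : s < g := ZMod.val_lt _
  have hscast : (s : ZMod g) = -(uu b : ZMod g) * w := by
    rw [hs, ZMod.natCast_val, ZMod.cast_id]
  set x := (da / g) * s with hx
  set y := db / g with hy
  set S : Multiset G := replicate x a + replicate y b with hS
  have hdiv : g ∣ s * uu a + uu b := by
    have h0 : ((s * uu a + uu b : ℕ) : ZMod g) = 0 := by
      push_cast
      rw [hscast]
      calc -(uu b : ZMod g) * w * (uu a : ZMod g) + (uu b : ZMod g)
          = -((uu b : ZMod g) * (w * (uu a : ZMod g))) + (uu b : ZMod g) := by ring
        _ = 0 := by rw [hwua, mul_one]; ring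
    exact (ZMod.natCast_eq_zero_iff _ _).mp h0
  have hxa : x * ((n / da) * uu a) = (n / g) * (s * uu a) := by
    have h1 : da / g * (n / da) = n / g := by
      rw [Nat.div_mul_div_comm hgda hdan, mul_comm da n, Nat.mul_div_mul_right _ _ hda0]
    calc x * ((n / da) * uu a) = (da / g * (n / da)) * (s * uu a) := by rw [hx]; ring
      _ = (n / g) * (s * uu a) := by rw [h1]
  have hyb : y * ((n / db) * uu b) = (n / g) * uu b := by
    have h1 : db / g * (n / db) = n / g := by
      rw [Nat.div_mul_div_comm hgdb hdbn, mul_comm db n, Nat.mul_div_mul_right _ _ hdb0]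
    calc y * ((n / db) * uu b) = (db / g * (n / db)) * uu b := by rw [hy]; ring
      _ = (n / g) * uu b := by rw [h1]
  have hsum : S.sum = 0 := by
    rw [hS, Multiset.sum_add, Multiset.sum_replicate, Multiset.sum_replicate]
    nth_rewrite 1 [← hmu a]
    nth_rewrite 1 [← hmu b]
    rw [smul_smul, smul_smul, hxa, hyb, ← add_nsmul]
    rw [← addOrderOf_dvd_iff_nsmul_eq_zero, he]
    obtain ⟨t, ht⟩ := hdiv
    rw [← mul_add, ht, ← mul_assoc, Nat.div_mul_cancel hgn]
    exact dvd_mul_right _ _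
  have hmem : ∀ t ∈ S, t ∈ ({a, b} : Set G) := by
    intro t ht
    rw [hS, Multiset.mem_add] at ht
    rcases ht with ht | ht
    · left; exact Multiset.eq_of_mem_replicate ht
    · right; exact Multiset.eq_of_mem_replicate ht
  obtain ⟨m, hm⟩ := whf_crossNum_nat _ hW S ⟨hmem, hsum⟩
  have hgQ : (g : ℚ) ≠ 0 := Nat.cast_ne_zero.mpr hg0.ne'
  have hdaQ : (da : ℚ) ≠ 0 := Nat.cast_ne_zero.mpr hda0.ne'
  have hdbQ : (db : ℚ) ≠ 0 := Nat.cast_ne_zero.mpr hdb0.ne'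
  have hcross : crossNum S = ((s : ℚ) + 1) / (g : ℚ) := by
    rw [hS, crossNum_add', crossNum_replicate', crossNum_replicate', ← hda, ← hdb]
    have hxQ : (x : ℚ) = (da : ℚ) / g * s := by
      rw [hx]; push_cast [Nat.cast_div hgda hgQ]; ring
    have hyQ : (y : ℚ) = (db : ℚ) / g := by
      rw [hy]; exact_mod_cast Nat.cast_div hgdb hgQ
    rw [hxQ, hyQ]
    field_simp
  rw [hcross] at hm
  have hnat : s + 1 = m * g := by
    have hq : ((s : ℚ) + 1) = (m : ℚ) * g := by
      field_simp at hm
      linarith [hm]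
    exact_mod_cast hq
  have hm1 : m = 1 := by nlinarith [hslt, hnat]
  have hsg : s + 1 = g := by rw [hm1, one_mul] at hnat; exact hnat
  have hsneg : (s : ZMod g) = -1 := by
    have h0 : ((s + 1 : ℕ) : ZMod g) = 0 := by rw [hsg]; exact ZMod.natCast_self g
    push_cast at h0
    linear_combination h0
  rw [hsneg] at hscast
  have hubw : (uu b : ZMod g) * w = 1 := by linear_combination hscast
  have hfin : (uu b : ZMod g) * (w * (uu a : ZMod g)) = (uu a : ZMod g) := by
    rw [← mul_assoc, hubw, one_mul]
  rw [hwua, mul_one] at hfin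
  exact hfin.symm

end Cyclic
section Cyclic2

variable {G : Type*} [AddCommGroup G] [Fintype G]

lemma integrality (e : G) (he : addOrderOf e = Fintype.card G)
    (uu : G → ℕ)
    (hmu : ∀ g : G, ((Fintype.card G / addOrderOf g) * uu g) • e = g)
    (hcop : ∀ g : G, Nat.Coprime (uu g) (addOrderOf g))
    (S : Multiset G) (hsum : S.sum = 0)
    (hpair : ∀ a ∈ S, ∀ b ∈ S,
      ((uu a : ZMod (Nat.gcd (addOrderOf a) (addOrderOf b)))
        = (uu b : ZMod (Nat.gcd (addOrderOf a) (addOrderOf b))))) :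
    ∃ m : ℕ, crossNum S = (m : ℚ) := by
  classical
  set n := Fintype.card G with hn
  have hn0 : 0 < n := Fintype.card_pos
  have hd0 : ∀ g : G, 0 < addOrderOf g := fun g => addOrderOf_pos g
  have hdn : ∀ g : G, addOrderOf g ∣ n := fun g => addOrderOf_dvd_card
  have hnd0 : ∀ g : G, n / addOrderOf g ≠ 0 :=
    fun g => (Nat.div_pos (Nat.le_of_dvd hn0 (hdn g)) (hd0 g)).ne'
  rcases eq_or_ne S 0 with rfl | hS0
  · exact ⟨0, by simp [crossNum]⟩
  set K := (S.map fun g => n / addOrderOf g).sum with hK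
  set M := (S.map fun g => n / addOrderOf g * uu g).sum with hM
  have hsmul : ∀ T : Multiset G, (T.map fun g => n / addOrderOf g * uu g).sum • e = T.sum := by
    intro T
    induction T using Multiset.induction_on with
    | empty => simp
    | cons a s ih => simp [Multiset.sum_cons, add_nsmul, ih, hmu a]
  have hnM : n ∣ M := by
    rw [← he, addOrderOf_dvd_iff_nsmul_eq_zero]
    rw [hM, hsmul S, hsum]
  obtain ⟨g1, hg1⟩ := Multiset.exists_mem_of_ne_zero hS0
  have hK0 : K ≠ 0 := by
    have h1 : 0 < n / addOrderOf g1 := Nat.pos_of_ne_zero (hnd0 g1)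
    have h2 : n / addOrderOf g1 ≤ K := by
      apply Multiset.single_le_sum (fun x _ => Nat.zero_le x)
      exact Multiset.mem_map_of_mem _ hg1
    omega
  have hppow : ∀ p : ℕ, p.Prime → p ^ n.factorization p ∣ K := by
    intro p hp
    set v := n.factorization p with hv
    have hSne : S.toFinset.Nonempty := ⟨g1, Multiset.mem_toFinset.mpr hg1⟩
    obtain ⟨g0, hg0S, hg0max⟩ := S.toFinset.exists_max_image
      (fun g => (addOrderOf g).factorization p) hSne
    rw [Multiset.mem_toFinset] at hg0S
    set w := (addOrderOf g0).factorization p with hwdef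
    have hfle : ∀ g : G, (addOrderOf g).factorization p ≤ v := by
      intro g
      have h1 := (Nat.factorization_le_iff_dvd (hd0 g).ne' hn0.ne').mpr (hdn g)
      exact Finsupp.le_def.mp h1 p
    have hdivnd : ∀ g : G, p ^ (v - (addOrderOf g).factorization p) ∣ n / addOrderOf g := by
      intro g
      rw [hp.pow_dvd_iff_le_factorization (hnd0 g), Nat.factorization_div (hdn g)]
      simp
      have := hfle g
      omega
    by_cases hw0 : w = 0
    · apply Multiset.dvd_sum
      intro z hz
      rw [Multiset.mem_map] at hz
      obtain ⟨g, hgS, rfl⟩ := hz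
      have hfg : (addOrderOf g).factorization p = 0 := by
        have := hg0max g (Multiset.mem_toFinset.mpr hgS)
        omega
      have := hdivnd g
      rwa [hfg, Nat.sub_zero] at this
    · have hpd : p ∣ addOrderOf g0 := by
        by_contra hnd
        exact hw0 (Nat.factorization_eq_zero_of_not_dvd hnd)
      have hpu : ¬ p ∣ uu g0 := fun hdvd =>
        Nat.Prime.one_lt hp |>.ne' (Nat.eq_one_of_dvd_one ((hcop g0) ▸ Nat.dvd_gcd hdvd hpd))
      have hdiff : ((p : ℤ) ^ v) ∣ (M : ℤ) - (uu g0 : ℤ) * (K : ℤ) := by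
        have hMZ : (M : ℤ) = (S.map fun g => ((n / addOrderOf g : ℕ) : ℤ) * (uu g : ℤ)).sum := by
          rw [hM]; push_cast [Multiset.map_map]; rfl
        have hKZ : (K : ℤ) = (S.map fun g => ((n / addOrderOf g : ℕ) : ℤ)).sum := by
          rw [hK]; push_cast [Multiset.map_map]; rfl
        have hsplit : (S.map fun g => ((n / addOrderOf g : ℕ) : ℤ) * ((uu g : ℤ) - (uu g0 : ℤ))).sum
            = (M : ℤ) - (uu g0 : ℤ) * (K : ℤ) := by
          rw [hMZ, hKZ, ← Multiset.sum_map_mul_left, ← Multiset.sum_map_sub]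
          congr 1
          apply Multiset.map_congr rfl
          intro z _
          ring
        rw [← hsplit]
        apply Multiset.dvd_sum
        intro z hz
        rw [Multiset.mem_map] at hz
        obtain ⟨g, hgS, rfl⟩ := hz
        set k := (addOrderOf g).factorization p with hk
        have hkv : k ≤ v := hfle g
        have hkw : k ≤ w := hg0max g (Multiset.mem_toFinset.mpr hgS)
        have h1 : ((p : ℤ) ^ (v - k)) ∣ ((n / addOrderOf g : ℕ) : ℤ) := by
          exact_mod_cast Int.natCast_dvd_natCast.mpr (hdivnd g)
        have h2 : ((p : ℤ) ^ k) ∣ ((uu g : ℤ) - (uu g0 : ℤ)) := by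
          have hpk1 : p ^ k ∣ addOrderOf g := Nat.ordProj_dvd _ _
          have hpk2 : p ^ k ∣ addOrderOf g0 := dvd_trans (pow_dvd_pow p hkw) (Nat.ordProj_dvd _ _)
          have hpkg : p ^ k ∣ Nat.gcd (addOrderOf g) (addOrderOf g0) := Nat.dvd_gcd hpk1 hpk2
          have hmod : uu g0 ≡ uu g [MOD Nat.gcd (addOrderOf g) (addOrderOf g0)] :=
            ((ZMod.natCast_eq_natCast_iff _ _ _).mp (hpair g hgS g0 hg0S)).symm
          have := hmod.dvd
          exact dvd_trans (by exact_mod_cast Int.natCast_dvd_natCast.mpr hpkg) this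
        calc (p : ℤ) ^ v = (p : ℤ) ^ (v - k) * (p : ℤ) ^ k := (pow_sub_mul_pow _ hkv).symm
          _ ∣ _ := mul_dvd_mul h1 h2
      have hpvM : ((p : ℤ) ^ v) ∣ (M : ℤ) := by
        have h1 : p ^ v ∣ n := Nat.ordProj_dvd _ _
        exact_mod_cast Int.natCast_dvd_natCast.mpr (dvd_trans h1 hnM)
      have hpvuK : p ^ v ∣ uu g0 * K := by
        have h1 : ((p : ℤ) ^ v) ∣ ((uu g0 * K : ℕ) : ℤ) := by
          push_cast
          have := dvd_sub hpvM hdiff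
          simpa using this
        exact_mod_cast h1
      have hcp : Nat.Coprime (p ^ v) (uu g0) :=
        Nat.Coprime.pow_left _ ((Nat.Prime.coprime_iff_not_dvd hp).mpr hpu)
      exact hcp.dvd_of_dvd_mul_left hpvuK
  have hnK : n ∣ K := by
    rw [← Nat.factorization_le_iff_dvd hn0.ne' hK0]
    rw [Finsupp.le_def]
    intro p
    by_cases hp : p.Prime
    · exact (hp.pow_dvd_iff_le_factorization hK0).mp (hppow p hp)
    · simp [Nat.factorization_eq_zero_of_not_prime _ hp]
  -- cross number computation
  have hcast : ∀ T : Multiset G, ((T.map fun g => n / addOrderOf g).sum : ℚ)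
      = (n : ℚ) * crossNum T := by
    intro T
    induction T using Multiset.induction_on with
    | empty => simp [crossNum]
    | cons a s ih =>
      rw [Multiset.map_cons, Multiset.sum_cons, crossNum]
      rw [Multiset.map_cons, Multiset.sum_cons, ← crossNum]
      rw [Nat.cast_add, ih, Nat.cast_div (hdn a) (Nat.cast_ne_zero.mpr (hd0 a).ne')]
      rw [mul_add, mul_one_div]
  refine ⟨K / n, ?_⟩
  have h1 : (n : ℚ) * crossNum S = ((K / n : ℕ) : ℚ) * n := by
    rw [← hcast S, ← hK, Nat.cast_div hnK (Nat.cast_ne_zero.mpr hn0.ne')]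
    field_simp
  have hnQ : (n : ℚ) ≠ 0 := Nat.cast_ne_zero.mpr hn0.ne'
  exact mul_left_cancel₀ hnQ (h1.trans (mul_comm _ _))

end Cyclic2
/-- If a subset `G0` of a finite cyclic group is not weakly
half-factorial, then it contains a two-element subset that is not weakly
half-factorial. -/
theorem stmt_8 {G : Type*} [AddCommGroup G] [Fintype G] (hcyc : IsAddCyclic G)
    (G0 : Set G) (h : ¬ WeaklyHF G0) :
    ∃ a b : G, a ∈ G0 ∧ b ∈ G0 ∧ a ≠ b ∧ ¬ WeaklyHF ({a, b} : Set G) := by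
  by_contra hcon
  push_neg at hcon
  obtain ⟨e, hgen⟩ := @IsAddCyclic.exists_generator G _ hcyc
  set n := Fintype.card G with hn
  have hn0 : 0 < n := Fintype.card_pos
  have he : addOrderOf e = n := by
    rw [addOrderOf_eq_card_of_forall_mem_zmultiples hgen, Nat.card_eq_fintype_card]
  have hrep : ∀ g : G, ∃ k : ℕ, k • e = g := by
    intro g
    obtain ⟨k, hk⟩ := AddSubgroup.mem_zmultiples_iff.mp (hgen g)
    refine ⟨(k % (n : ℤ)).toNat, ?_⟩
    have hnz : (n : ℤ) ≠ 0 := by exact_mod_cast hn0.ne'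
    have htn : ((k % (n:ℤ)).toNat : ℤ) = k % n := Int.toNat_of_nonneg (Int.emod_nonneg k hnz)
    have hne : (n : ℤ) • e = 0 := by
      rw [natCast_zsmul]
      exact addOrderOf_dvd_iff_nsmul_eq_zero.mp (he ▸ dvd_refl (addOrderOf e))
    have hk2 : ((k % (n:ℤ)) • e) = k • e := by
      conv_rhs => rw [← Int.emod_add_mul_ediv k n]
      rw [add_zsmul, mul_comm, mul_zsmul, hne, smul_zero, add_zero]
    rw [← natCast_zsmul, htn, hk2, hk]
  choose mm hmm using hrep
  set uu : G → ℕ := fun g => mm g / Nat.gcd (mm g) n with huu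
  have hdg : ∀ g : G, addOrderOf g = n / Nat.gcd n (mm g) := by
    intro g
    have h0 := addOrderOf_nsmul (n := mm g) e
    rw [hmm g, he] at h0
    exact h0
  have hmu : ∀ g : G, ((n / addOrderOf g) * uu g) • e = g := by
    intro g
    have h1 : n / addOrderOf g = Nat.gcd n (mm g) := by
      rw [hdg g, Nat.div_div_self (Nat.gcd_dvd_left n (mm g)) hn0.ne']
    rw [h1, huu, Nat.gcd_comm n (mm g), Nat.mul_div_cancel' (Nat.gcd_dvd_left (mm g) n)]
    exact hmm g
  have hcop : ∀ g : G, Nat.Coprime (uu g) (addOrderOf g) := by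
    intro g
    have h2 : 0 < Nat.gcd (mm g) n := Nat.gcd_pos_of_pos_right _ hn0
    have h3 := Nat.coprime_div_gcd_div_gcd (m := mm g) (n := n) h2
    rw [huu, hdg g, Nat.gcd_comm n (mm g)]
    exact h3
  rw [WeaklyHF] at h
  push_neg at h
  obtain ⟨A, hAmin, hA⟩ := h
  have hpair : ∀ a ∈ A, ∀ b ∈ A,
      ((uu a : ZMod (Nat.gcd (addOrderOf a) (addOrderOf b)))
        = (uu b : ZMod (Nat.gcd (addOrderOf a) (addOrderOf b)))) := by
    intro a ha b hb
    rcases eq_or_ne a b with rfl | hne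
    · rfl
    · exact pair_congr e he uu hmu hcop a b
        (hcon a b (hAmin.2.1.1 a ha) (hAmin.2.1.1 b hb) hne)
  obtain ⟨m, hm⟩ := integrality e he uu hmu hcop A hAmin.2.1.2 hpair
  exact hA m hm
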